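/- Let μ₀ > 0, let a : ℝ → ℝ be twice continuously differentiable with a, a', a'' bounded and a(x) ≥ μ₀ for all x, and let b : ℝ → ℝ be continuously differentiable with b, b' bounded. Set β := (1/2)(sup_{x∈ℝ}|a''(x)| + sup_{x∈ℝ}|b'(x)|). Then for every φ ∈ 𝒮(ℝ): ∫ (−a(x)φ'''(x) + b(x)φ''(x))·φ'(x) dx ≥ −(β²/(4μ₀)) · ‖φ‖_{L²}². -/

import Mathlib

open MeasureTheory SchwartzMap

/-- `‖u‖_{L²} := (∫ u²)^{1/2}`. -/
noncomputable def L2norm (u : ℝ → ℝ) : ℝ := Real.sqrt (∫ x, u x ^ 2)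

lemma schwartz_bdd (f : 𝓢(ℝ, ℝ)) : ∃ C, ∀ x, ‖f x‖ ≤ C :=
  ⟨‖f.toBoundedContinuousFunction‖, fun x => by
    simpa using f.toBoundedContinuousFunction.norm_coe_le_norm x⟩

lemma intS2 (f g : 𝓢(ℝ, ℝ)) : Integrable (fun x => f x * g x) :=
  by obtain ⟨C, hC⟩ := schwartz_bdd f
     exact g.integrable.bdd_mul f.continuous.aestronglyMeasurable (Filter.Eventually.of_forall hC)

lemma intS (c : ℝ → ℝ) (hc : Continuous c) (C : ℝ) (hC : ∀ x, |c x| ≤ C)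
    (f g : 𝓢(ℝ, ℝ)) : Integrable (fun x => c x * (f x * g x)) :=
  (intS2 f g).bdd_mul hc.aestronglyMeasurable (Filter.Eventually.of_forall fun x => by simpa using hC x)

/-- Regularity Lemma B.3 with explicit constant `C = 1/4`:
`⟨A(t)φ', φ'⟩ ≥ −(β²/(4μ₀))‖φ‖²` where `A(t)ψ = −aψ'' + bψ'` and
`β = (1/2)(sup |a''| + sup |b'|)`. -/
theorem stmt_7 (μ₀ : ℝ) (hμ₀ : 0 < μ₀) (a b : ℝ → ℝ)
    (ha : ContDiff ℝ 2 a)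
    (ha0 : ∃ C, ∀ x, |a x| ≤ C)
    (ha1 : ∃ C, ∀ x, |deriv a x| ≤ C)
    (ha2 : ∃ C, ∀ x, |deriv (deriv a) x| ≤ C)
    (halb : ∀ x, μ₀ ≤ a x)
    (hb : ContDiff ℝ 1 b)
    (hb0 : ∃ C, ∀ x, |b x| ≤ C)
    (hb1 : ∃ C, ∀ x, |deriv b x| ≤ C)
    (β : ℝ)
    (hβ : β = (1 / 2) * ((⨆ x : ℝ, |deriv (deriv a) x|) + ⨆ x : ℝ, |deriv b x|))
    (φ : 𝓢(ℝ, ℝ)) :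
    ∫ x, (-a x * deriv (deriv (deriv φ)) x + b x * deriv (deriv φ) x)
        * deriv (φ : ℝ → ℝ) x ≥
      -(β ^ 2 / (4 * μ₀)) * L2norm (fun x => φ x) ^ 2 := by
  simp only [L2norm]
  obtain ⟨Ca, hCa⟩ := ha0
  obtain ⟨Ca1, hCa1⟩ := ha1
  obtain ⟨Ca2, hCa2⟩ := ha2
  obtain ⟨Cb, hCb⟩ := hb0
  obtain ⟨Cb1, hCb1⟩ := hb1
  set φ₁ := derivCLM ℝ ℝ φ with hφ₁
  set φ₂ := derivCLM ℝ ℝ φ₁ with hφ₂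
  set φ₃ := derivCLM ℝ ℝ φ₂ with hφ₃
  have e1 : ⇑φ₁ = deriv ⇑φ := funext fun x => derivCLM_apply ℝ φ x
  have e2 : ⇑φ₂ = deriv (deriv ⇑φ) := by
    rw [show ⇑φ₂ = deriv ⇑φ₁ from funext fun x => derivCLM_apply ℝ φ₁ x, e1]
  have e3 : ⇑φ₃ = deriv (deriv (deriv ⇑φ)) := by
    rw [show ⇑φ₃ = deriv ⇑φ₂ from funext fun x => derivCLM_apply ℝ φ₂ x, e2]
  have ha' : ContDiff ℝ 1 (deriv a) :=
    (contDiff_succ_iff_deriv.mp (show ContDiff ℝ (1 + 1) a by norm_num [ha])).2.2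
  have haD : ∀ x, HasDerivAt a (deriv a x) x := fun x =>
    ((ha.differentiable (by norm_num)) x).hasDerivAt
  have haD' : ∀ x, HasDerivAt (deriv a) (deriv (deriv a) x) x := fun x =>
    ((ha'.differentiable one_ne_zero) x).hasDerivAt
  have hca' : Continuous (deriv a) := ha'.continuous
  have hca'' : Continuous (deriv (deriv a)) := (contDiff_one_iff_deriv.mp ha').2
  have hbD : ∀ x, HasDerivAt b (deriv b x) x := fun x =>
    ((hb.differentiable one_ne_zero) x).hasDerivAt
  have hcb' : Continuous (deriv b) := (contDiff_one_iff_deriv.mp hb).2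
  have hD : ∀ (f : 𝓢(ℝ, ℝ)) x, HasDerivAt f (derivCLM ℝ ℝ f x) x := fun f x => by
    rw [derivCLM_apply]
    exact (((f.smooth 1).differentiable one_ne_zero) x).hasDerivAt
  -- integrability
  have I1 : Integrable (fun x => a x * (φ₃ x * φ₁ x)) := intS a ha.continuous Ca hCa φ₃ φ₁
  have I2 : Integrable (fun x => a x * (φ₂ x * φ₂ x)) := intS a ha.continuous Ca hCa φ₂ φ₂
  have I3 : Integrable (fun x => deriv a x * (φ₂ x * φ₁ x)) := intS _ hca' Ca1 hCa1 φ₂ φ₁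
  have I4 : Integrable (fun x => deriv (deriv a) x * (φ₁ x * φ₁ x)) :=
    intS _ hca'' Ca2 hCa2 φ₁ φ₁
  have I5 : Integrable (fun x => b x * (φ₂ x * φ₁ x)) := intS b hb.continuous Cb hCb φ₂ φ₁
  have I6 : Integrable (fun x => deriv b x * (φ₁ x * φ₁ x)) := intS _ hcb' Cb1 hCb1 φ₁ φ₁
  have I7 : Integrable (fun x => φ₁ x * φ₁ x) := intS2 φ₁ φ₁
  have I8 : Integrable (fun x => φ x * φ₂ x) := intS2 φ φ₂
  have I9 : Integrable (fun x => φ₂ x * φ₂ x) := intS2 φ₂ φ₂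
  have I0 : Integrable (fun x => φ x * φ x) := intS2 φ φ
  -- zero identities (integration by parts)
  have Z1 : (∫ x, deriv a x * (φ₂ x * φ₁ x)) + ((∫ x, a x * (φ₃ x * φ₁ x))
      + ∫ x, a x * (φ₂ x * φ₂ x)) = 0 := by
    have Z : ∫ x, (deriv a x * (φ₂ x * φ₁ x)
        + (a x * (φ₃ x * φ₁ x) + a x * (φ₂ x * φ₂ x))) = 0 := by
      refine integral_eq_zero_of_hasDerivAt_of_integrable
        (f := fun x => a x * (φ₂ x * φ₁ x)) (fun x => ?_) (I3.add (I1.add I2))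
        (intS a ha.continuous Ca hCa φ₂ φ₁)
      have h := (haD x).mul ((hD φ₂ x).mul (hD φ₁ x))
      refine h.congr_deriv ?_
      simp only [← hφ₃, Pi.mul_apply]
      ring
    have I12 : Integrable (fun x => a x * (φ₃ x * φ₁ x) + a x * (φ₂ x * φ₂ x)) :=
      I1.add I2
    rw [integral_add I3 I12] at Z
    rwa [integral_add I1 I2] at Z
  have Z2 : (∫ x, deriv (deriv a) x * (φ₁ x * φ₁ x))
      + 2 * (∫ x, deriv a x * (φ₂ x * φ₁ x)) = 0 := by
    have Z : ∫ x, (deriv (deriv a) x * (φ₁ x * φ₁ x)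
        + 2 * (deriv a x * (φ₂ x * φ₁ x))) = 0 := by
      refine integral_eq_zero_of_hasDerivAt_of_integrable
        (f := fun x => deriv a x * (φ₁ x * φ₁ x)) (fun x => ?_) (I4.add (I3.const_mul 2))
        (intS _ hca' Ca1 hCa1 φ₁ φ₁)
      have h := (haD' x).mul ((hD φ₁ x).mul (hD φ₁ x))
      refine h.congr_deriv ?_
      simp only [← hφ₂, Pi.mul_apply]
      ring
    rw [integral_add I4 (I3.const_mul 2)] at Z
    rwa [integral_const_mul] at Z
  have Z3 : (∫ x, deriv b x * (φ₁ x * φ₁ x))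
      + 2 * (∫ x, b x * (φ₂ x * φ₁ x)) = 0 := by
    have Z : ∫ x, (deriv b x * (φ₁ x * φ₁ x) + 2 * (b x * (φ₂ x * φ₁ x))) = 0 := by
      refine integral_eq_zero_of_hasDerivAt_of_integrable
        (f := fun x => b x * (φ₁ x * φ₁ x)) (fun x => ?_) (I6.add (I5.const_mul 2))
        (intS b hb.continuous Cb hCb φ₁ φ₁)
      have h := (hbD x).mul ((hD φ₁ x).mul (hD φ₁ x))
      refine h.congr_deriv ?_
      simp only [← hφ₂, Pi.mul_apply]
      ring
    rw [integral_add I6 (I5.const_mul 2)] at Z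
    rwa [integral_const_mul] at Z
  have Z4 : (∫ x, φ₁ x * φ₁ x) + (∫ x, φ x * φ₂ x) = 0 := by
    have Z : ∫ x, (φ₁ x * φ₁ x + φ x * φ₂ x) = 0 := by
      refine integral_eq_zero_of_hasDerivAt_of_integrable
        (f := fun x => φ x * φ₁ x) (fun x => ?_) (I7.add I8) (intS2 φ φ₁)
      exact (hD φ x).mul (hD φ₁ x)
    rwa [integral_add I7 I8] at Z
  -- rewrite the goal in terms of φ₁, φ₂, φ₃
  rw [ge_iff_le, ← e3, ← e2, ← e1]
  -- decompose the left-hand side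
  have hLHS : ∫ x, (-a x * φ₃ x + b x * φ₂ x) * φ₁ x
      = -(∫ x, a x * (φ₃ x * φ₁ x)) + ∫ x, b x * (φ₂ x * φ₁ x) := by
    have I1n : Integrable (fun x => -(a x * (φ₃ x * φ₁ x))) := I1.neg
    rw [← integral_neg, ← integral_add I1n I5]
    congr 1
    funext x
    ring
  have hK0 : Real.sqrt (∫ x, φ x ^ 2) ^ 2 = ∫ x, φ x * φ x := by
    rw [Real.sq_sqrt (integral_nonneg fun x => sq_nonneg _)]
    congr 1
    funext x
    ring
  rw [hK0, hLHS]
  -- lower bound by ellipticity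
  have hA : μ₀ * (∫ x, φ₂ x * φ₂ x) ≤ ∫ x, a x * (φ₂ x * φ₂ x) := by
    rw [← integral_const_mul]
    exact integral_mono (I9.const_mul μ₀) I2 fun x =>
      mul_le_mul_of_nonneg_right (halb x) (mul_self_nonneg _)
  -- sup bounds
  have bddA : BddAbove (Set.range fun x => |deriv (deriv a) x|) :=
    ⟨Ca2, by rintro y ⟨x, rfl⟩; exact hCa2 x⟩
  have bddB : BddAbove (Set.range fun x => |deriv b x|) :=
    ⟨Cb1, by rintro y ⟨x, rfl⟩; exact hCb1 x⟩
  have hJ2 : (∫ x, deriv (deriv a) x * (φ₁ x * φ₁ x))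
      ≤ (⨆ x, |deriv (deriv a) x|) * ∫ x, φ₁ x * φ₁ x := by
    rw [← integral_const_mul]
    exact integral_mono I4 (I7.const_mul _) fun x =>
      mul_le_mul_of_nonneg_right ((le_abs_self _).trans (le_ciSup bddA x))
        (mul_self_nonneg _)
  have hJ3 : (∫ x, deriv b x * (φ₁ x * φ₁ x))
      ≤ (⨆ x, |deriv b x|) * ∫ x, φ₁ x * φ₁ x := by
    rw [← integral_const_mul]
    exact integral_mono I6 (I7.const_mul _) fun x =>
      mul_le_mul_of_nonneg_right ((le_abs_self _).trans (le_ciSup bddB x))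
        (mul_self_nonneg _)
  have hβK : 2 * (β * ∫ x, φ₁ x * φ₁ x)
      = (⨆ x, |deriv (deriv a) x|) * (∫ x, φ₁ x * φ₁ x)
        + (⨆ x, |deriv b x|) * ∫ x, φ₁ x * φ₁ x := by
    rw [hβ]; ring
  have hbk : β * ∫ x, φ₁ x * φ₁ x = β * -(∫ x, φ x * φ₂ x) := by
    rw [show (∫ x, φ₁ x * φ₁ x) = -(∫ x, φ x * φ₂ x) by linarith [Z4]]
  -- sharp AM-GM step
  have hAM : β * -(∫ x, φ x * φ₂ x) ≤ μ₀ * (∫ x, φ₂ x * φ₂ x)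
      + β ^ 2 / (4 * μ₀) * ∫ x, φ x * φ x := by
    have key : ∫ x, β * -(φ x * φ₂ x)
        ≤ ∫ x, (μ₀ * (φ₂ x * φ₂ x) + β ^ 2 / (4 * μ₀) * (φ x * φ x)) := by
      refine integral_mono (I8.neg.const_mul β)
        ((I9.const_mul μ₀).add (I0.const_mul _)) fun x => ?_
      have h4 : 4 * μ₀ * (β ^ 2 / (4 * μ₀)) = β ^ 2 := by field_simp
      simp only
      nlinarith [sq_nonneg (2 * μ₀ * φ₂ x + β * φ x), hμ₀]
    rwa [integral_const_mul, integral_neg,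
      integral_add (I9.const_mul μ₀) (I0.const_mul _),
      integral_const_mul, integral_const_mul] at key
  linarith [hA, hJ2, hJ3, hAM, Z1, Z2, Z3, hβK, hbk]
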